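/- Let r, s be nonnegative real numbers with r² + s² = 1 and (r, s) ≠ (0, 0). Then 2r²s² / (r³ + s³)² ≤ 1, with equality if and only if r = s. -/
import Mathlib


theorem rs_ratio_le_one (r s : ℝ) (hr : 0 ≤ r) (hs : 0 ≤ s) (h : r ^ 2 + s ^ 2 = 1)
    (hne : (r, s) ≠ (0, 0)) :
    2 * r ^ 2 * s ^ 2 / (r ^ 3 + s ^ 3) ^ 2 ≤ 1 ∧
      (2 * r ^ 2 * s ^ 2 / (r ^ 3 + s ^ 3) ^ 2 = 1 ↔ r = s) := by
  have hr1 : r ≤ 1 := by nlinarith [sq_nonneg s]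
  have hs1 : s ≤ 1 := by nlinarith [sq_nonneg r]
  have hq : r * s ≤ 1 / 2 := by nlinarith [sq_nonneg (r - s)]
  have hcube : 0 < r ^ 3 + s ^ 3 := by
    nlinarith [sq_nonneg (r ^ 2 - s ^ 2), pow_nonneg hr 3, pow_nonneg hs 3,
      mul_nonneg hr hs, sq_nonneg (r - s), sq_nonneg (r + s)]
  have hD : 0 < (r ^ 3 + s ^ 3) ^ 2 := by positivity
  have h2 : (0:ℝ) ≤ (r + s) ^ 2 - (r * s) ^ 2 := by
    nlinarith [mul_nonneg hr hs, sq_nonneg (r * s)]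
  have hiden : (r ^ 3 + s ^ 3) ^ 2 - 2 * r ^ 2 * s ^ 2
      = (r - s) ^ 2 * ((r + s) ^ 2 - (r * s) ^ 2) := by
    linear_combination (r ^ 4 + s ^ 4) * h
  have key : 2 * r ^ 2 * s ^ 2 ≤ (r ^ 3 + s ^ 3) ^ 2 := by
    nlinarith [mul_nonneg (sq_nonneg (r - s)) h2]
  constructor
  · rw [div_le_one hD]; exact key
  · constructor
    · intro heq
      rw [div_eq_one_iff_eq (ne_of_gt hD)] at heq
      have h3 : (0:ℝ) < (r + s) ^ 2 - (r * s) ^ 2 := by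
        nlinarith [mul_nonneg hr hs, sq_nonneg (r * s)]
      have h4 : (r - s) ^ 2 * ((r + s) ^ 2 - (r * s) ^ 2) = 0 := by
        rw [← hiden]; linarith
      have h5 : (r - s) ^ 2 = 0 := by
        rcases mul_eq_zero.1 h4 with h' | h'
        · exact h'
        · linarith
      have := sq_eq_zero_iff.1 h5
      linarith
    · intro heq
      subst heq
      have hrpos : 0 < r := by nlinarith
      rw [div_eq_one_iff_eq (ne_of_gt hD)]
      nlinarith [sq_nonneg r]
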